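/- Let r ∈ (0,1). There is a constant c > 0 such that for all s ∈ (0, r], all integers N ≥ 1, and all z with |z| ≤ s: |∏_{n=1}^{N} h(f_n(z))| ≤ c (|z|/s) q_ν^{N} p_1^{−νN(N+1)/2} f_{N+1}(s)^{νN}. -/

import Mathlib

open Filter Topology

lemma aux_summable {c : ℕ → ℝ} (hsum : ∑' k, c k = 1) : Summable c := by
  by_contra hs
  rw [tsum_eq_zero_of_not_summable hs] at hsum
  norm_num at hsum

lemma aux_summable_pow {c : ℕ → ℝ} (hc : ∀ k, 0 ≤ c k) (hcs : Summable c)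
    {x : ℝ} (h0 : 0 ≤ x) (h1 : x ≤ 1) : Summable (fun k => c k * x ^ k) := by
  refine hcs.of_nonneg_of_le (fun k => mul_nonneg (hc k) (pow_nonneg h0 k)) (fun k => ?_)
  calc c k * x ^ k ≤ c k * 1 :=
        mul_le_mul_of_nonneg_left (pow_le_one₀ h0 h1) (hc k)
    _ = c k := mul_one _

lemma aux_summable_complex {c : ℕ → ℝ} (hc : ∀ k, 0 ≤ c k) (hcs : Summable c)
    {z : ℂ} (h1 : ‖z‖ ≤ 1) : Summable (fun k => (c k : ℂ) * z ^ k) := by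
  refine Summable.of_norm (hcs.of_nonneg_of_le (fun k => by positivity) (fun k => ?_))
  rw [norm_mul, norm_pow, Complex.norm_real, Real.norm_of_nonneg (hc k)]
  calc c k * ‖z‖ ^ k ≤ c k * 1 :=
        mul_le_mul_of_nonneg_left (pow_le_one₀ (norm_nonneg z) h1) (hc k)
    _ = c k := mul_one _

lemma aux_norm_tsum {c : ℕ → ℝ} (hc : ∀ k, 0 ≤ c k) (hcs : Summable c)
    {z : ℂ} (h1 : ‖z‖ ≤ 1) :
    ‖∑' k, (c k : ℂ) * z ^ k‖ ≤ ∑' k, c k * ‖z‖ ^ k := by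
  have hs : Summable (fun k => ‖(c k : ℂ) * z ^ k‖) := by
    have := aux_summable_pow hc hcs (norm_nonneg z) h1
    refine this.congr fun k => ?_
    rw [norm_mul, norm_pow, Complex.norm_real, Real.norm_of_nonneg (hc k)]
  calc ‖∑' k, (c k : ℂ) * z ^ k‖ ≤ ∑' k, ‖(c k : ℂ) * z ^ k‖ := norm_tsum_le_tsum_norm hs
    _ = ∑' k, c k * ‖z‖ ^ k := by
        refine tsum_congr fun k => ?_
        rw [norm_mul, norm_pow, Complex.norm_real, Real.norm_of_nonneg (hc k)]

lemma aux_mono {c : ℕ → ℝ} (hc : ∀ k, 0 ≤ c k) (hcs : Summable c)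
    {x y : ℝ} (h0 : 0 ≤ x) (hxy : x ≤ y) (h1 : y ≤ 1) :
    (∑' k, c k * x ^ k) ≤ ∑' k, c k * y ^ k :=
  Summable.tsum_le_tsum
    (fun k => mul_le_mul_of_nonneg_left (pow_le_pow_left₀ h0 hxy k) (hc k))
    (aux_summable_pow hc hcs h0 (hxy.trans h1))
    (aux_summable_pow hc hcs (h0.trans hxy) h1)

theorem stmt_8
    (p : ℕ → ℝ) (hp0 : p 0 = 0) (hp1 : 0 < p 1) (hp1' : p 1 < 1)
    (hpnn : ∀ k, 0 ≤ p k) (hpsum : ∑' k, p k = 1)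
    (hmean : Summable fun k : ℕ => (k : ℝ) * p k)
    (a : ℝ) (ha : a = ∑' k : ℕ, (k : ℝ) * p k) (ha1 : 1 < a)
    (f : ℂ → ℂ) (hf : ∀ z : ℂ, ‖z‖ ≤ 1 → f z = ∑' n, (p n : ℂ) * z ^ n)
    (fIter : ℕ → ℂ → ℂ) (hf0 : ∀ z, fIter 0 z = z)
    (hfS : ∀ n z, fIter (n + 1) z = f (fIter n z))
    (q : ℕ → ℝ) (hq0 : q 0 = 0) (hqnn : ∀ k, 0 ≤ q k) (hqsum : ∑' k, q k = 1)
    (ν : ℕ) (hν : 0 < q ν) (hνmin : ∀ i, 0 < q i → ν ≤ i)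
    (h : ℂ → ℂ) (hh : ∀ z : ℂ, ‖z‖ ≤ 1 → h z = ∑' n, (q n : ℂ) * z ^ n)
    (r : ℝ) (hr0 : 0 < r) (hr1 : r < 1) :
    ∃ c : ℝ, 0 < c ∧
      ∀ s : ℝ, 0 < s → s ≤ r → ∀ N : ℕ, 1 ≤ N → ∀ z : ℂ, ‖z‖ ≤ s →
        ‖∏ n ∈ Finset.Icc 1 N, h (fIter n z)‖ ≤
          c * (‖z‖ / s) * q ν ^ N * p 1 ^ (-((ν : ℝ) * N * (N + 1)) / 2) *
            (fIter (N + 1) (s : ℂ)).re ^ (ν * N) := by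
  have hpS : Summable p := aux_summable hpsum
  have hqS : Summable q := aux_summable hqsum
  set F : ℝ → ℝ := fun x => ∑' n, p n * x ^ n with hFdef
  set H : ℝ → ℝ := fun x => ∑' n, q n * x ^ n with hHdef
  have hν1 : 1 ≤ ν := by
    rcases Nat.eq_zero_or_pos ν with h0 | h0
    · rw [h0, hq0] at hν; exact absurd hν (lt_irrefl 0)
    · exact h0
  have hqzero : ∀ i, i < ν → q i = 0 := by
    intro i hi
    rcases (hqnn i).eq_or_lt with h' | h'
    · exact h'.symm
    · exact absurd (hνmin i h') (by omega)
  have hqν1 : q ν ≤ 1 := by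
    rw [← hqsum]; exact Summable.le_tsum hqS ν (fun j _ => hqnn j)
  set ρ : ℝ := p 1 + (1 - p 1) * r with hρdef
  have hρ0 : 0 < ρ := by
    have : 0 ≤ (1 - p 1) * r := by nlinarith
    linarith
  have hρ1 : ρ < 1 := by nlinarith
  -- real generating function basics
  have hFnn : ∀ x : ℝ, 0 ≤ x → 0 ≤ F x :=
    fun x hx => tsum_nonneg (fun k => mul_nonneg (hpnn k) (pow_nonneg hx k))
  have hHnn : ∀ x : ℝ, 0 ≤ x → 0 ≤ H x :=
    fun x hx => tsum_nonneg (fun k => mul_nonneg (hqnn k) (pow_nonneg hx k))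
  have hFmono : ∀ x y : ℝ, 0 ≤ x → x ≤ y → y ≤ 1 → F x ≤ F y :=
    fun x y h0 hxy h1 => aux_mono hpnn hpS h0 hxy h1
  have hHmono : ∀ x y : ℝ, 0 ≤ x → x ≤ y → y ≤ 1 → H x ≤ H y :=
    fun x y h0 hxy h1 => aux_mono hqnn hqS h0 hxy h1
  have hFle : ∀ x : ℝ, 0 ≤ x → x ≤ 1 → F x ≤ x := by
    intro x hx0 hx1
    have step : ∀ n : ℕ, p n * x ^ n ≤ p n * x := by
      intro n
      match n with
      | 0 => simp [hp0]
      | Nat.succ m =>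
          refine mul_le_mul_of_nonneg_left ?_ (hpnn _)
          calc x ^ (m + 1) ≤ x ^ 1 := pow_le_pow_of_le_one hx0 hx1 (by omega)
            _ = x := pow_one x
    calc F x ≤ ∑' n, p n * x :=
          Summable.tsum_le_tsum step (aux_summable_pow hpnn hpS hx0 hx1) (hpS.mul_right x)
      _ = (∑' n, p n) * x := tsum_mul_right
      _ = x := by rw [hpsum, one_mul]
  have hFp1 : ∀ x : ℝ, 0 ≤ x → x ≤ 1 → p 1 * x ≤ F x := by
    intro x hx0 hx1
    have := Summable.le_tsum (aux_summable_pow hpnn hpS hx0 hx1) 1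
      (fun j _ => mul_nonneg (hpnn j) (pow_nonneg hx0 j))
    simpa using this
  have hFdiv : ∀ x y : ℝ, 0 ≤ x → x ≤ y → y ≤ 1 → F x * y ≤ F y * x := by
    intro x y hx0 hxy hy1
    have hy0 : 0 ≤ y := hx0.trans hxy
    have step : ∀ n : ℕ, p n * x ^ n * y ≤ p n * y ^ n * x := by
      intro n
      match n with
      | 0 => simp [hp0]
      | Nat.succ m =>
          have h1 : x ^ m * (x * y) ≤ y ^ m * (x * y) :=
            mul_le_mul_of_nonneg_right (pow_le_pow_left₀ hx0 hxy m)
              (mul_nonneg hx0 hy0)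
          have h2 : x ^ (m + 1) * y ≤ y ^ (m + 1) * x := by
            calc x ^ (m + 1) * y = x ^ m * (x * y) := by ring
              _ ≤ y ^ m * (x * y) := h1
              _ = y ^ (m + 1) * x := by ring
          calc p (m+1) * x ^ (m+1) * y = p (m+1) * (x ^ (m+1) * y) := by ring
            _ ≤ p (m+1) * (y ^ (m+1) * x) := mul_le_mul_of_nonneg_left h2 (hpnn _)
            _ = p (m+1) * y ^ (m+1) * x := by ring
    calc F x * y = ∑' n, p n * x ^ n * y := tsum_mul_right.symm
      _ ≤ ∑' n, p n * y ^ n * x :=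
          Summable.tsum_le_tsum step
            ((aux_summable_pow hpnn hpS hx0 (hxy.trans hy1)).mul_right y)
            ((aux_summable_pow hpnn hpS hy0 hy1).mul_right x)
      _ = F y * x := tsum_mul_right
  -- F x ≤ ρ x on [0, r]
  have hptail : (∑' n, if n = 1 then (0:ℝ) else p n) = 1 - p 1 := by
    have := Summable.tsum_eq_add_tsum_ite hpS 1
    rw [hpsum] at this
    linarith
  have hFρ : ∀ x : ℝ, 0 ≤ x → x ≤ r → F x ≤ ρ * x := by
    intro x hx0 hxr
    have hx1 : x ≤ 1 := hxr.trans hr1.le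
    have hsum1 : Summable (fun n => p n * x ^ n) := aux_summable_pow hpnn hpS hx0 hx1
    have hsplit := Summable.tsum_eq_add_tsum_ite hsum1 1
    have hsumIte : Summable (fun n => if n = 1 then (0:ℝ) else p n) := by
      refine hpS.of_nonneg_of_le (fun n => ?_) (fun n => ?_)
      · split <;> [exact le_refl 0; exact hpnn n]
      · split <;> [exact hpnn n; exact le_refl _]
    have hterm : ∀ n : ℕ, (if n = 1 then (0:ℝ) else p n * x ^ n) ≤
        (if n = 1 then (0:ℝ) else p n) * (r * x) := by
      intro n
      match n with
      | 0 => simp [hp0]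
      | 1 => simp
      | Nat.succ (Nat.succ m) =>
          have hne : m + 2 ≠ 1 := by omega
          simp only [hne, if_false]
          refine mul_le_mul_of_nonneg_left ?_ (hpnn _)
          calc x ^ (m + 2) ≤ x ^ 2 := pow_le_pow_of_le_one hx0 hx1 (by omega)
            _ = x * x := sq x
            _ ≤ r * x := mul_le_mul_of_nonneg_right hxr hx0
    have htail : (∑' n, if n = 1 then (0:ℝ) else p n * x ^ n) ≤ (1 - p 1) * (r * x) := by
      calc (∑' n, if n = 1 then (0:ℝ) else p n * x ^ n)
          ≤ ∑' n, (if n = 1 then (0:ℝ) else p n) * (r * x) := by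
            refine Summable.tsum_le_tsum hterm ?_ (hsumIte.mul_right _)
            refine hsum1.of_nonneg_of_le (fun n => ?_) (fun n => ?_)
            · split
              · exact le_refl 0
              · exact mul_nonneg (hpnn n) (pow_nonneg hx0 n)
            · split
              · exact mul_nonneg (hpnn n) (pow_nonneg hx0 n)
              · exact le_refl _
        _ = (∑' n, if n = 1 then (0:ℝ) else p n) * (r * x) := tsum_mul_right
        _ = (1 - p 1) * (r * x) := by rw [hptail]
    have : F x = p 1 * x ^ 1 + ∑' n, if n = 1 then (0:ℝ) else p n * x ^ n := hsplit
    rw [this, pow_one]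
    calc p 1 * x + (∑' n, if n = 1 then (0:ℝ) else p n * x ^ n)
        ≤ p 1 * x + (1 - p 1) * (r * x) := by linarith
      _ = ρ * x := by rw [hρdef]; ring
  -- H bounds
  have hHpow : ∀ x : ℝ, 0 ≤ x → x ≤ 1 → H x ≤ x ^ ν := by
    intro x hx0 hx1
    have step : ∀ n : ℕ, q n * x ^ n ≤ q n * x ^ ν := by
      intro n
      rcases lt_or_ge n ν with hn | hn
      · rw [hqzero n hn]; simp
      · exact mul_le_mul_of_nonneg_left (pow_le_pow_of_le_one hx0 hx1 hn) (hqnn n)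
    calc H x ≤ ∑' n, q n * x ^ ν :=
          Summable.tsum_le_tsum step (aux_summable_pow hqnn hqS hx0 hx1) (hqS.mul_right _)
      _ = (∑' n, q n) * x ^ ν := tsum_mul_right
      _ = x ^ ν := by rw [hqsum, one_mul]
  have hHsplit : ∀ x : ℝ, 0 ≤ x → x ≤ 1 → H x ≤ q ν * x ^ ν + x ^ (ν + 1) := by
    intro x hx0 hx1
    have hsum1 : Summable (fun n => q n * x ^ n) := aux_summable_pow hqnn hqS hx0 hx1
    have hsplit := Summable.tsum_eq_add_tsum_ite hsum1 ν
    have hsumIte : Summable (fun n => if n = ν then (0:ℝ) else q n) := by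
      refine hqS.of_nonneg_of_le (fun n => ?_) (fun n => ?_)
      · split <;> [exact le_refl 0; exact hqnn n]
      · split <;> [exact hqnn n; exact le_refl _]
    have hqtail : (∑' n, if n = ν then (0:ℝ) else q n) = 1 - q ν := by
      have := Summable.tsum_eq_add_tsum_ite hqS ν
      rw [hqsum] at this
      linarith
    have hterm : ∀ n : ℕ, (if n = ν then (0:ℝ) else q n * x ^ n) ≤
        (if n = ν then (0:ℝ) else q n) * x ^ (ν + 1) := by
      intro n
      rcases eq_or_ne n ν with hn | hn
      · simp [hn]
      · simp only [hn, if_false]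
        rcases lt_or_ge n ν with hn' | hn'
        · rw [hqzero n hn']; simp
        · have hn'' : ν + 1 ≤ n := by omega
          exact mul_le_mul_of_nonneg_left (pow_le_pow_of_le_one hx0 hx1 hn'') (hqnn n)
    have htail : (∑' n, if n = ν then (0:ℝ) else q n * x ^ n) ≤ x ^ (ν + 1) := by
      calc (∑' n, if n = ν then (0:ℝ) else q n * x ^ n)
          ≤ ∑' n, (if n = ν then (0:ℝ) else q n) * x ^ (ν + 1) := by
            refine Summable.tsum_le_tsum hterm ?_ (hsumIte.mul_right _)
            refine hsum1.of_nonneg_of_le (fun n => ?_) (fun n => ?_)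
            · split
              · exact le_refl 0
              · exact mul_nonneg (hqnn n) (pow_nonneg hx0 n)
            · split
              · exact mul_nonneg (hqnn n) (pow_nonneg hx0 n)
              · exact le_refl _
        _ = (∑' n, if n = ν then (0:ℝ) else q n) * x ^ (ν + 1) := tsum_mul_right
        _ = (1 - q ν) * x ^ (ν + 1) := by rw [hqtail]
        _ ≤ 1 * x ^ (ν + 1) := by
            refine mul_le_mul_of_nonneg_right (by linarith) (pow_nonneg hx0 _)
        _ = x ^ (ν + 1) := one_mul _
    have : H x = q ν * x ^ ν + ∑' n, if n = ν then (0:ℝ) else q n * x ^ n := hsplit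
    rw [this]
    linarith
  -- complex bounds
  have hFnorm : ∀ w : ℂ, ‖w‖ ≤ 1 → ‖f w‖ ≤ F ‖w‖ := by
    intro w hw
    rw [hf w hw]
    exact aux_norm_tsum hpnn hpS hw
  have hHnorm : ∀ w : ℂ, ‖w‖ ≤ 1 → ‖h w‖ ≤ H ‖w‖ := by
    intro w hw
    rw [hh w hw]
    exact aux_norm_tsum hqnn hqS hw
  have hfreal : ∀ x : ℝ, 0 ≤ x → x ≤ 1 → f (x : ℂ) = ((F x : ℝ) : ℂ) := by
    intro x hx0 hx1
    have hxnorm : ‖(x : ℂ)‖ ≤ 1 := by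
      rw [Complex.norm_real, Real.norm_of_nonneg hx0]; exact hx1
    rw [hf _ hxnorm, hFdef]
    rw [Complex.ofReal_tsum]
    refine tsum_congr fun n => ?_
    push_cast
    ring
  -- iterate facts
  have hIter_mem : ∀ n : ℕ, ∀ x : ℝ, 0 ≤ x → x ≤ 1 → 0 ≤ F^[n] x ∧ F^[n] x ≤ x := by
    intro n
    induction n with
    | zero =>
        intro x hx0 hx1
        simp only [Function.iterate_zero, id_eq]
        exact ⟨hx0, le_refl x⟩
    | succ n ih =>
        intro x hx0 hx1
        rw [Function.iterate_succ_apply']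
        obtain ⟨h1, h2⟩ := ih x hx0 hx1
        exact ⟨hFnn _ h1, (hFle _ h1 (h2.trans hx1)).trans h2⟩
  have hIter_mono : ∀ n : ℕ, ∀ x y : ℝ, 0 ≤ x → x ≤ y → y ≤ 1 → F^[n] x ≤ F^[n] y := by
    intro n
    induction n with
    | zero => intro x y _ hxy _; simpa using hxy
    | succ n ih =>
        intro x y hx0 hxy hy1
        rw [Function.iterate_succ_apply', Function.iterate_succ_apply']
        obtain ⟨hx1', hx2'⟩ := hIter_mem n x hx0 (hxy.trans hy1)
        obtain ⟨hy1', hy2'⟩ := hIter_mem n y (hx0.trans hxy) hy1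
        exact hFmono _ _ hx1' (ih x y hx0 hxy hy1) (hy2'.trans hy1)
  have hIter_pos : ∀ n : ℕ, ∀ x : ℝ, 0 < x → x ≤ 1 → 0 < F^[n] x := by
    intro n
    induction n with
    | zero => intro x hx0 _; simpa using hx0
    | succ n ih =>
        intro x hx0 hx1
        rw [Function.iterate_succ_apply']
        obtain ⟨h1, h2⟩ := hIter_mem n x hx0.le hx1
        have := hFp1 _ h1 (h2.trans hx1)
        have := ih x hx0 hx1
        nlinarith
  have hIter_ρ : ∀ n : ℕ, ∀ x : ℝ, 0 ≤ x → x ≤ r → F^[n] x ≤ ρ ^ n * x := by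
    intro n
    induction n with
    | zero => intro x hx0 _; simp
    | succ n ih =>
        intro x hx0 hxr
        rw [Function.iterate_succ_apply']
        obtain ⟨h1, h2⟩ := hIter_mem n x hx0 (hxr.trans hr1.le)
        calc F (F^[n] x) ≤ ρ * F^[n] x := hFρ _ h1 (h2.trans hxr)
          _ ≤ ρ * (ρ ^ n * x) := mul_le_mul_of_nonneg_left (ih x hx0 hxr) hρ0.le
          _ = ρ ^ (n + 1) * x := by ring
  have hIterC : ∀ n : ℕ, ∀ x : ℝ, 0 ≤ x → x ≤ 1 → fIter n (x : ℂ) = ((F^[n] x : ℝ) : ℂ) := by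
    intro n
    induction n with
    | zero => intro x _ _; rw [hf0]; simp
    | succ n ih =>
        intro x hx0 hx1
        rw [hfS, ih x hx0 hx1, Function.iterate_succ_apply']
        obtain ⟨h1, h2⟩ := hIter_mem n x hx0 hx1
        exact hfreal _ h1 (h2.trans hx1)
  have hIter_norm : ∀ n : ℕ, ∀ w : ℂ, ‖w‖ ≤ 1 → ‖fIter n w‖ ≤ F^[n] ‖w‖ := by
    intro n
    induction n with
    | zero => intro w _; rw [hf0]; simp
    | succ n ih =>
        intro w hw
        rw [hfS, Function.iterate_succ_apply']
        obtain ⟨h1, h2⟩ := hIter_mem n ‖w‖ (norm_nonneg w) hw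
        have hn1 : ‖fIter n w‖ ≤ F^[n] ‖w‖ := ih w hw
        calc ‖f (fIter n w)‖ ≤ F ‖fIter n w‖ :=
              hFnorm _ (hn1.trans (h2.trans hw))
          _ ≤ F (F^[n] ‖w‖) := hFmono _ _ (norm_nonneg _) hn1 (h2.trans hw)
  have hstep : ∀ k m : ℕ, ∀ x : ℝ, 0 ≤ x → x ≤ 1 → p 1 ^ k * F^[m] x ≤ F^[m + k] x := by
    intro k
    induction k with
    | zero => intro m x _ _; simp
    | succ k ih =>
        intro m x hx0 hx1
        obtain ⟨h1, h2⟩ := hIter_mem (m + k) x hx0 hx1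
        have hmk : m + (k + 1) = (m + k) + 1 := by omega
        rw [hmk, Function.iterate_succ_apply']
        calc p 1 ^ (k + 1) * F^[m] x = p 1 * (p 1 ^ k * F^[m] x) := by ring
          _ ≤ p 1 * F^[m + k] x :=
              mul_le_mul_of_nonneg_left (ih m x hx0 hx1) hp1.le
          _ ≤ F (F^[m + k] x) := hFp1 _ h1 (h2.trans hx1)
  -- Gauss sum
  have hSsum : ∀ N : ℕ, 2 * (∑ n ∈ Finset.Icc 1 N, (N + 1 - n)) = N * (N + 1) := by
    intro N
    induction N with
    | zero => simp
    | succ N ih =>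
        rw [Finset.sum_Icc_succ_top (by omega)]
        have hshift : ∑ n ∈ Finset.Icc 1 N, (N + 1 + 1 - n) =
            (∑ n ∈ Finset.Icc 1 N, (N + 1 - n)) + N := by
          have : ∀ n ∈ Finset.Icc 1 N, N + 1 + 1 - n = (N + 1 - n) + 1 := by
            intro n hn
            rw [Finset.mem_Icc] at hn
            omega
          rw [Finset.sum_congr rfl this, Finset.sum_add_distrib, Finset.sum_const,
            Nat.card_Icc]
          simp
        rw [hshift]
        have : N + 1 + 1 - (N + 1) = 1 := by omega
        rw [this]
        nlinarith [ih]
  -- the final constant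
  refine ⟨Real.exp ((1 - ρ)⁻¹ / q ν) / q ν, by positivity, ?_⟩
  intro s hs0 hsr N hN z hz
  set x : ℝ := ‖z‖ with hxdef
  have hx0 : 0 ≤ x := norm_nonneg z
  have hs1 : s ≤ 1 := hsr.trans hr1.le
  have hx1 : x ≤ 1 := hz.trans hs1
  set M : ℕ := ν * ∑ n ∈ Finset.Icc 1 N, (N + 1 - n) with hMdef
  -- rewrite the rpow
  have hMcast : (M : ℝ) * 2 = (ν : ℝ) * N * (N + 1) := by
    have h1 : 2 * M = ν * (N * (N + 1)) := by
      rw [hMdef, Nat.mul_left_comm, hSsum N]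
    have h2 := congrArg (Nat.cast : ℕ → ℝ) h1
    push_cast at h2
    linarith
  have hrpow : p 1 ^ (-((ν : ℝ) * N * (N + 1)) / 2) = (p 1 ^ M)⁻¹ := by
    have hexp : -((ν : ℝ) * N * (N + 1)) / 2 = -(M : ℝ) := by
      rw [div_eq_iff (two_ne_zero)]
      linarith
    rw [hexp, ← Real.rpow_natCast (p 1) M, ← Real.rpow_neg hp1.le]
  have hre : (fIter (N + 1) (s : ℂ)).re = F^[N + 1] s := by
    rw [hIterC (N + 1) s hs0.le hs1, Complex.ofReal_re]
  rw [hrpow, hre]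
  -- key per-factor bound
  have hkey : ∀ n : ℕ, ‖h (fIter n z)‖ ≤ H (F^[n] x) := by
    intro n
    have hn1 := hIter_norm n z hx1
    obtain ⟨h1, h2⟩ := hIter_mem n x hx0 hx1
    calc ‖h (fIter n z)‖ ≤ H ‖fIter n z‖ := hHnorm _ (hn1.trans (h2.trans hx1))
      _ ≤ H (F^[n] x) := hHmono _ _ (norm_nonneg _) hn1 (h2.trans hx1)
  have step1 : ‖∏ n ∈ Finset.Icc 1 N, h (fIter n z)‖ ≤
      ∏ n ∈ Finset.Icc 1 N, H (F^[n] x) := by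
    rw [norm_prod]
    exact Finset.prod_le_prod (fun n _ => norm_nonneg _) (fun n _ => hkey n)
  have hsplit_set : Finset.Icc 1 N = insert 1 (Finset.Icc 2 N) := by
    ext n
    simp only [Finset.mem_Icc, Finset.mem_insert]
    omega
  have h1notin : (1 : ℕ) ∉ Finset.Icc 2 N := by simp
  -- factor for n = 1
  have factor1 : H (F^[1] x) ≤ (x / s) * (F s) ^ ν := by
    rw [Function.iterate_one]
    obtain ⟨hFx0, hFx1⟩ := hIter_mem 1 x hx0 hx1
    rw [Function.iterate_one] at hFx0 hFx1
    have hFs0 : 0 ≤ F s := hFnn s hs0.le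
    have hFxs : F x ≤ x / s * F s := by
      rw [div_mul_eq_mul_div, le_div_iff₀ hs0]
      have := hFdiv x s hx0 hz hs1
      linarith [this]
    have hxs1 : x / s ≤ 1 := div_le_one_of_le₀ hz hs0.le
    have hxs0 : 0 ≤ x / s := div_nonneg hx0 hs0.le
    calc H (F x) ≤ (F x) ^ ν := hHpow _ hFx0 (hFx1.trans hx1)
      _ ≤ (x / s * F s) ^ ν := pow_le_pow_left₀ hFx0 hFxs ν
      _ = (x / s) ^ ν * (F s) ^ ν := mul_pow _ _ _
      _ ≤ (x / s) ^ 1 * (F s) ^ ν := by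
          refine mul_le_mul_of_nonneg_right
            (pow_le_pow_of_le_one hxs0 hxs1 hν1) (pow_nonneg hFs0 ν)
      _ = (x / s) * (F s) ^ ν := by rw [pow_one]
  -- factors for n ≥ 2 (in fact all n)
  have factor2 : ∀ n : ℕ, H (F^[n] x) ≤
      (q ν * Real.exp (ρ ^ n / q ν)) * (F^[n] s) ^ ν := by
    intro n
    obtain ⟨hFs0, hFs1⟩ := hIter_mem n s hs0.le hs1
    have hmono := hIter_mono n x s hx0 hz hs1
    obtain ⟨hFx0, _⟩ := hIter_mem n x hx0 hx1
    have hρn : F^[n] s ≤ ρ ^ n := by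
      calc F^[n] s ≤ ρ ^ n * s := hIter_ρ n s hs0.le hsr
        _ ≤ ρ ^ n * 1 := mul_le_mul_of_nonneg_left hs1 (pow_nonneg hρ0.le n)
        _ = ρ ^ n := mul_one _
    have hexp : q ν + ρ ^ n ≤ q ν * Real.exp (ρ ^ n / q ν) := by
      have h1 := Real.add_one_le_exp (ρ ^ n / q ν)
      have h2 : q ν * (ρ ^ n / q ν + 1) ≤ q ν * Real.exp (ρ ^ n / q ν) :=
        mul_le_mul_of_nonneg_left h1 hν.le
      have h3 : q ν * (ρ ^ n / q ν + 1) = ρ ^ n + q ν := by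
        field_simp
      linarith
    calc H (F^[n] x) ≤ H (F^[n] s) :=
          hHmono _ _ hFx0 hmono (hFs1.trans hs1)
      _ ≤ q ν * (F^[n] s) ^ ν + (F^[n] s) ^ (ν + 1) :=
          hHsplit _ hFs0 (hFs1.trans hs1)
      _ = (q ν + F^[n] s) * (F^[n] s) ^ ν := by ring
      _ ≤ (q ν + ρ ^ n) * (F^[n] s) ^ ν := by
          refine mul_le_mul_of_nonneg_right (by linarith) (pow_nonneg hFs0 ν)
      _ ≤ (q ν * Real.exp (ρ ^ n / q ν)) * (F^[n] s) ^ ν :=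
          mul_le_mul_of_nonneg_right hexp (pow_nonneg hFs0 ν)
  -- product of exponential factors
  have hexp_prod : ∏ n ∈ Finset.Icc 2 N, Real.exp (ρ ^ n / q ν) ≤
      Real.exp ((1 - ρ)⁻¹ / q ν) := by
    rw [← Real.exp_sum]
    refine Real.exp_le_exp.mpr ?_
    rw [← Finset.sum_div]
    have hsumle : ∑ n ∈ Finset.Icc 2 N, ρ ^ n ≤ (1 - ρ)⁻¹ := by
      calc ∑ n ∈ Finset.Icc 2 N, ρ ^ n ≤ ∑' n : ℕ, ρ ^ n := by
            refine Summable.sum_le_tsum _ (fun i _ => pow_nonneg hρ0.le i) ?_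
            exact summable_geometric_of_lt_one hρ0.le hρ1
        _ = (1 - ρ)⁻¹ := tsum_geometric_of_lt_one hρ0.le hρ1
    gcongr
  -- the product over Icc 1 N of (F^[n] s)^ν
  have hFiterS_pos : ∀ n : ℕ, 0 < F^[n] s := fun n => hIter_pos n s hs0 hs1
  have prodF : p 1 ^ M * ∏ n ∈ Finset.Icc 1 N, (F^[n] s) ^ ν ≤
      (F^[N + 1] s) ^ (ν * N) := by
    have hfac : ∀ n ∈ Finset.Icc 1 N,
        (p 1 ^ (N + 1 - n)) ^ ν * (F^[n] s) ^ ν ≤ (F^[N + 1] s) ^ ν := by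
      intro n hn
      rw [Finset.mem_Icc] at hn
      rw [← mul_pow]
      refine pow_le_pow_left₀ (mul_nonneg (pow_nonneg hp1.le _) (hFiterS_pos n).le) ?_ ν
      have := hstep (N + 1 - n) n s hs0.le hs1
      rwa [show n + (N + 1 - n) = N + 1 by omega] at this
    have hprod := Finset.prod_le_prod
      (fun n _ => mul_nonneg (pow_nonneg (pow_nonneg hp1.le _) ν)
        (pow_nonneg (hFiterS_pos n).le ν))
      hfac
    rw [Finset.prod_mul_distrib] at hprod
    have hleft : ∏ n ∈ Finset.Icc 1 N, (p 1 ^ (N + 1 - n)) ^ ν = p 1 ^ M := by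
      have : ∀ n, (p 1 ^ (N + 1 - n)) ^ ν = p 1 ^ ((N + 1 - n) * ν) := by
        intro n; rw [← pow_mul]
      rw [Finset.prod_congr rfl (fun n _ => this n), Finset.prod_pow_eq_pow_sum]
      congr 1
      rw [hMdef, ← Finset.sum_mul]
      ring
    have hright : ∏ _n ∈ Finset.Icc 1 N, (F^[N + 1] s) ^ ν =
        (F^[N + 1] s) ^ (ν * N) := by
      rw [Finset.prod_const, Nat.card_Icc, ← pow_mul, Nat.add_sub_cancel]
    rw [hleft, hright] at hprod
    exact hprod
  -- assemble
  have hxs0 : 0 ≤ x / s := div_nonneg hx0 hs0.le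
  have hFs0 : 0 ≤ F s := hFnn s hs0.le
  have hFN1 : 0 ≤ (F^[N + 1] s) ^ (ν * N) := pow_nonneg (hFiterS_pos (N + 1)).le _
  have hprodF_pos : (0:ℝ) ≤ ∏ n ∈ Finset.Icc 1 N, (F^[n] s) ^ ν :=
    Finset.prod_nonneg (fun n _ => pow_nonneg (hFiterS_pos n).le ν)
  calc ‖∏ n ∈ Finset.Icc 1 N, h (fIter n z)‖
      ≤ ∏ n ∈ Finset.Icc 1 N, H (F^[n] x) := step1
    _ = H (F^[1] x) * ∏ n ∈ Finset.Icc 2 N, H (F^[n] x) := by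
        rw [hsplit_set, Finset.prod_insert h1notin]
    _ ≤ ((x / s) * (F s) ^ ν) *
        ∏ n ∈ Finset.Icc 2 N, (q ν * Real.exp (ρ ^ n / q ν)) * (F^[n] s) ^ ν := by
        refine mul_le_mul factor1 ?_ ?_ ?_
        · exact Finset.prod_le_prod (fun n _ => by
            obtain ⟨h1, h2⟩ := hIter_mem n x hx0 hx1
            exact hHnn _ h1) (fun n _ => factor2 n)
        · exact Finset.prod_nonneg (fun n _ => by
            obtain ⟨h1, h2⟩ := hIter_mem n x hx0 hx1
            exact hHnn _ h1)
        · exact mul_nonneg hxs0 (pow_nonneg hFs0 ν)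
    _ = (x / s) * (q ν ^ (N - 1) *
          ∏ n ∈ Finset.Icc 2 N, Real.exp (ρ ^ n / q ν)) *
          ((F s) ^ ν * ∏ n ∈ Finset.Icc 2 N, (F^[n] s) ^ ν) := by
        rw [Finset.prod_mul_distrib, Finset.prod_mul_distrib, Finset.prod_const,
          Nat.card_Icc]
        have : N + 1 - 2 = N - 1 := by omega
        rw [this]
        ring
    _ = (x / s) * (q ν ^ (N - 1) *
          ∏ n ∈ Finset.Icc 2 N, Real.exp (ρ ^ n / q ν)) *
          ∏ n ∈ Finset.Icc 1 N, (F^[n] s) ^ ν := by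
        rw [hsplit_set, Finset.prod_insert h1notin, Function.iterate_one]
    _ ≤ (x / s) * (q ν ^ (N - 1) * Real.exp ((1 - ρ)⁻¹ / q ν)) *
          ((p 1 ^ M)⁻¹ * (F^[N + 1] s) ^ (ν * N)) := by
        refine mul_le_mul ?_ ?_ hprodF_pos ?_
        · refine mul_le_mul_of_nonneg_left ?_ hxs0
          refine mul_le_mul_of_nonneg_left hexp_prod (pow_nonneg hν.le _)
        · rw [← le_div_iff₀' (pow_pos hp1 M)] at prodF
          rw [inv_mul_eq_div]
          exact prodF
        · positivity
    _ = Real.exp ((1 - ρ)⁻¹ / q ν) / q ν * (x / s) * q ν ^ N * (p 1 ^ M)⁻¹ *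
          (F^[N + 1] s) ^ (ν * N) := by
        have hqpow : q ν ^ (N - 1) * q ν = q ν ^ N := by
          rw [← pow_succ]
          congr 1
          omega
        field_simp
        rw [← hqpow]
        ring
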